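/- Let I and J be finite index types and let α, β, γ be complex numbers with α + β + γ = 0. On the space A of pairs X = (X₁, X₂), where X₁ is an I×J complex matrix and X₂ is a J×I complex matrix, define the 3-commutator T(X, Y, Z) = (P, Q) with P = α(X₁Y₂Z₁ + Z₁Y₂X₁) + β(Z₁X₂Y₁ + Y₁X₂Z₁) + γ(X₁Z₂Y₁ + Y₁Z₂X₁) and Q = α(X₂Y₁Z₂ + Z₂Y₁X₂) + β(Z₂X₁Y₂ + Y₂X₁Z₂) + γ(X₂Z₁Y₂ + Y₂Z₁X₂). Then for all X, Y, Z in A one has T(X, Y, Z) + T(Z, X, Y) + T(Y, Z, X) = 0 (both components vanish). -/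
import Mathlib


open Matrix

/-- The 3-commutator on pairs of rectangular matrices
`(X₁ : I×J, X₂ : J×I)`, with weights `α β γ`. -/
noncomputable def tcomm {I J : Type*} [Fintype I] [Fintype J] (α β γ : ℂ)
    (X Y Z : Matrix I J ℂ × Matrix J I ℂ) : Matrix I J ℂ × Matrix J I ℂ :=
  (α • (X.1 * Y.2 * Z.1 + Z.1 * Y.2 * X.1) +
     β • (Z.1 * X.2 * Y.1 + Y.1 * X.2 * Z.1) +
     γ • (X.1 * Z.2 * Y.1 + Y.1 * Z.2 * X.1),
   α • (X.2 * Y.1 * Z.2 + Z.2 * Y.1 * X.2) +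
     β • (Z.2 * X.1 * Y.2 + Y.2 * X.1 * Z.2) +
     γ • (X.2 * Z.1 * Y.2 + Y.2 * Z.1 * X.2))

theorem stmt_6 {I J : Type*} [Fintype I] [Fintype J] (α β γ : ℂ)
    (h : α + β + γ = 0) (X Y Z : Matrix I J ℂ × Matrix J I ℂ) :
    tcomm α β γ X Y Z + tcomm α β γ Z X Y + tcomm α β γ Y Z X = 0 := by
  have hγ : γ = -α - β := by linear_combination h
  subst hγ
  simp only [tcomm, Prod.mk_add_mk, Prod.ext_iff, Prod.fst_add, Prod.snd_add, Prod.fst_zero, Prod.snd_zero]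
  constructor <;> module
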